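/- Let R = ℤ/4ℤ and let A be the subgroup of G(R) consisting of those automorphisms σ for which σ(x) - x is nilpotent. Let H be a subgroup of G(R) that is not contained in A and such that H ∩ A contains a non-identity element. Then the ring of invariants R[x]^H equals R[y², 2y], where y = x·(-x + 1). -/

import Mathlib

open Polynomial

/-- The subgroup `A` of `G(ℤ/4ℤ)` consisting of the automorphisms `σ` of `(ℤ/4ℤ)[x]`
for which `σ(x) - x` is nilpotent. -/
noncomputable def nilShiftSubgroup : Subgroup ((ZMod 4)[X] ≃ₐ[ZMod 4] (ZMod 4)[X]) where
  carrier := {σ | IsNilpotent (σ X - X)}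
  one_mem' := by
    simp only [Set.mem_setOf_eq, AlgEquiv.one_apply, sub_self]
    exact IsNilpotent.zero
  mul_mem' := by
    intro σ τ hσ hτ
    have h : (σ * τ) X - X = (σ X - X) + σ (τ X - X) := by
      show σ (τ X) - X = _
      rw [map_sub]
      ring
    have : IsNilpotent (σ (τ X - X)) := hτ.map σ.toAlgHom
    rw [Set.mem_setOf_eq, h]
    exact (Commute.all _ _).isNilpotent_add hσ this
  inv_mem' := by
    intro σ hσ
    show IsNilpotent (σ.symm X - X)
    have h : σ.symm X - X = -(σ.symm (σ X - X)) := by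
      rw [map_sub, σ.symm_apply_apply]
      ring
    rw [h]
    exact (hσ.map σ.symm.toAlgHom).neg

namespace Zmod4Inv

/-- the reduction hom ℤ/4 → ℤ/2 -/
noncomputable abbrev ψ : ZMod 4 →+* ZMod 2 := ZMod.castHom (show 2 ∣ 4 by norm_num) (ZMod 2)

noncomputable abbrev y4 : (ZMod 4)[X] := X * (-X + 1)
noncomputable abbrev Y2 : (ZMod 4)[X] := (X * (-X + 1)) ^ 2

lemma hC2 : (C (2 : ZMod 4) : (ZMod 4)[X]) = 2 := by rw [map_ofNat]

lemma h4 : (4 : (ZMod 4)[X]) = 0 := by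
  rw [← map_ofNat (C : ZMod 4 →+* (ZMod 4)[X]) 4, show (4 : ZMod 4) = 0 by decide, map_zero]

lemma hCC : (C 2 * C 2 : (ZMod 4)[X]) = 0 := by rw [hC2]; linear_combination h4

lemma h2F : (2 : (ZMod 2)[X]) = 0 := by
  rw [← map_ofNat (C : ZMod 2 →+* (ZMod 2)[X]) 2, show (2 : ZMod 2) = 0 by decide, map_zero]

/-- coefficient half -/
noncomputable def hf (a : ZMod 4) : ZMod 4 := if a = 2 then 1 else 0

lemma hf_zero : hf 0 = 0 := by unfold hf; decide

lemma exists_C2_mul {p : (ZMod 4)[X]} (h : p.map ψ = 0) : ∃ w, p = C 2 * w := by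
  refine ⟨⟨⟨p.toFinsupp.coeff.mapRange hf hf_zero⟩⟩, ?_⟩
  ext n
  have hc : (ψ (p.coeff n) : ZMod 2) = 0 := by
    have := congrArg (fun q => Polynomial.coeff q n) h
    simpa using this
  rw [coeff_C_mul]
  show p.coeff n = 2 * hf (p.coeff n)
  revert hc
  generalize p.coeff n = a
  revert a
  unfold hf
  decide

lemma two_mul_eq_zero_iff {q : (ZMod 4)[X]} : C 2 * q = 0 ↔ q.map ψ = 0 := by
  constructor
  · intro h
    ext n
    have := congrArg (fun p => Polynomial.coeff p n) h
    simp only [coeff_C_mul, coeff_zero] at this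
    simp only [coeff_map, coeff_zero]
    revert this; generalize q.coeff n = a; revert a; decide
  · intro h
    obtain ⟨w, rfl⟩ := exists_C2_mul h
    rw [← mul_assoc, hCC, zero_mul]

lemma isNilpotent_iff_map {p : (ZMod 4)[X]} : IsNilpotent p ↔ p.map ψ = 0 := by
  constructor
  · intro h
    have : IsNilpotent (p.map ψ) := h.map (mapRingHom ψ)
    exact this.eq_zero
  · intro h
    obtain ⟨w, rfl⟩ := exists_C2_mul h
    exact ⟨2, by rw [mul_pow, sq, hCC, zero_mul]⟩

lemma sqz (w : (ZMod 4)[X]) : (C 2 * w) * (C 2 * w) = 0 := by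
  linear_combination (w * w) * hCC

section Taylor
variable {R : Type*} [CommRing R]

lemma pow_X_add_sq_zero (h : R[X]) (hh : h * h = 0) (n : ℕ) :
    (X + h) ^ n = X ^ n + C (n : R) * X ^ (n - 1) * h := by
  induction n with
  | zero => simp
  | succ n ih =>
    rcases Nat.eq_zero_or_pos n with rfl | hn
    · simp
    · rw [pow_succ, ih]
      have hX : X * X ^ (n - 1) = (X : R[X]) ^ n := by
        rw [← pow_succ']; congr 1; omega
      push_cast
      rw [map_add, C_1]
      linear_combination (C (n : R) * h) * hX + (C (n : R) * X ^ (n-1)) * hh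

lemma comp_X_add_sq_zero (g h : R[X]) (hh : h * h = 0) :
    g.comp (X + h) = g + derivative g * h := by
  induction g using Polynomial.induction_on' with
  | add p q hp hq =>
    rw [add_comp, hp, hq, derivative_add]
    ring
  | monomial n a =>
    rw [monomial_comp, pow_X_add_sq_zero h hh, derivative_monomial]
    rw [← C_mul_X_pow_eq_monomial, ← C_mul_X_pow_eq_monomial, C_mul]
    ring
end Taylor

lemma autApply (σ : (ZMod 4)[X] ≃ₐ[ZMod 4] (ZMod 4)[X]) (p : (ZMod 4)[X]) :
    σ p = p.comp (σ X) := by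
  have h : (σ : (ZMod 4)[X] →ₐ[ZMod 4] (ZMod 4)[X]) = aeval (σ X) :=
    Polynomial.algHom_ext (by simp)
  have := congrArg (fun F => F p) h
  simpa [comp_eq_aeval] using this

lemma sigma_X_structure (σ : (ZMod 4)[X] ≃ₐ[ZMod 4] (ZMod 4)[X]) :
    (σ X).map ψ = X ∨ (σ X).map ψ = X + C 1 := by
  have key : ((σ.symm X).map ψ).comp ((σ X).map ψ) = X := by
    rw [← Polynomial.map_comp, ← autApply, σ.apply_symm_apply, map_X]
  have hdeg : ((σ X).map ψ).natDegree = 1 := by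
    have := congrArg natDegree key
    rw [natDegree_comp, natDegree_X] at this
    exact Nat.eq_one_of_mul_eq_one_left this
  set f := (σ X).map ψ with hfd
  have hne : f ≠ 0 := fun h0 => by simp [h0] at hdeg
  have h1 : f.coeff 1 ≠ 0 := by
    have := leadingCoeff_ne_zero.mpr hne
    rwa [leadingCoeff, hdeg] at this
  have h1' : f.coeff 1 = 1 := by
    revert h1; generalize f.coeff 1 = a; revert a; decide
  have hform : f = C (f.coeff 1) * X + C (f.coeff 0) :=
    eq_X_add_C_of_natDegree_le_one (by omega)
  rw [h1', map_one, one_mul] at hform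
  have : f.coeff 0 = 0 ∨ f.coeff 0 = 1 := by
    generalize f.coeff 0 = a; revert a; decide
  rcases this with h | h
  · left; rw [hform, h, map_zero, add_zero]
  · right; rw [hform, h]

lemma shift_inv_F2 : ∀ u : (ZMod 2)[X], u.comp (X + C 1) = u →
    ∃ Q : (ZMod 2)[X], u = Q.comp (X ^ 2 + X) := by
  have h2 : (2 : (ZMod 2)[X]) = 0 := h2F
  have hm : (X ^ 2 + X : (ZMod 2)[X]).Monic := by monicity!
  have hdm : (X ^ 2 + X : (ZMod 2)[X]).degree = 2 := by compute_degree!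
  suffices H : ∀ n : ℕ, ∀ u : (ZMod 2)[X], u.natDegree = n → u.comp (X + C 1) = u →
      ∃ Q : (ZMod 2)[X], u = Q.comp (X ^ 2 + X) by
    exact fun u hu => H u.natDegree u rfl hu
  intro n
  induction n using Nat.strong_induction_on with
  | _ n ih =>
  intro u hn hu
  by_cases hle : u.natDegree ≤ 1
  · have hform : u = C (u.coeff 1) * X + C (u.coeff 0) := eq_X_add_C_of_natDegree_le_one hle
    set a := u.coeff 1
    set b := u.coeff 0
    have hcomp : u.comp (X + C 1) = C a * X + C (a + b) := by
      rw [hform, add_comp, mul_comp, C_comp, X_comp, C_comp, mul_add, ← C_mul, mul_one,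
        add_assoc, ← C_add]
    rw [hu, hform] at hcomp
    have ha : a = 0 := by
      have := C_injective (add_left_cancel hcomp)
      linear_combination -this
    exact ⟨C b, by rw [hform, ha, map_zero, zero_mul, zero_add, C_comp]⟩
  · push_neg at hle
    set m : (ZMod 2)[X] := X ^ 2 + X with hmdef
    have hmshift : m.comp (X + C 1) = m := by
      simp only [hmdef, add_comp, pow_comp, X_comp, C_comp]
      rw [C_1]
      linear_combination (X + 1) * h2
    set q := u /ₘ m with hq
    set r := u %ₘ m with hr
    have hdiv : r + m * q = u := modByMonic_add_div u m
    have hdegr : r.degree < m.degree := degree_modByMonic_lt u hm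
    have hndr : r.natDegree ≤ 1 := by
      rcases eq_or_ne r 0 with h0 | h0
      · simp [h0]
      · rw [hdm] at hdegr
        have := (natDegree_lt_iff_degree_lt (n := 2) h0).mpr (by exact_mod_cast hdegr)
        omega
    have hrform : r = C (r.coeff 1) * X + C (r.coeff 0) := eq_X_add_C_of_natDegree_le_one hndr
    set a := r.coeff 1
    set b := r.coeff 0
    have hrcomp : r.comp (X + C 1) = C a * X + C (a + b) := by
      rw [hrform, add_comp, mul_comp, C_comp, X_comp, C_comp, mul_add, ← C_mul, mul_one,
        add_assoc, ← C_add]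
    have huniq := div_modByMonic_unique (f := u) (g := m) (q.comp (X + C 1))
        (C a * X + C (a + b)) hm ?_
    swap
    · constructor
      · rw [← hrcomp, ← hmshift, ← mul_comp, ← add_comp, hdiv]
        exact hu
      · calc (C a * X + C (a+b)).degree ≤ 1 := degree_linear_le
          _ < m.degree := by rw [hdm]; decide
    have hqinv : q.comp (X + C 1) = q := huniq.1.symm
    have ha : a = 0 := by
      have hrr : C a * X + C b = C a * X + C (a + b) := by
        rw [← hrform, hr, huniq.2]
      have := C_injective (add_left_cancel hrr)
      linear_combination -this
    have hune : u ≠ 0 := fun h0 => by simp [h0] at hle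
    have hlt : q.natDegree < n := by
      rcases eq_or_ne q 0 with h0 | h0
      · rw [h0, natDegree_zero, ← hn]; omega
      · rw [← hn]
        exact natDegree_lt_natDegree h0 (degree_divByMonic_lt u m hune (by rw [hdm]; decide))
    obtain ⟨Q, hQ⟩ := ih q.natDegree hlt q rfl hqinv
    refine ⟨C b + X * Q, ?_⟩
    rw [add_comp, C_comp, mul_comp, X_comp, ← hQ, ← hdiv, hrform, ha, map_zero,
      zero_mul, zero_add]

lemma deriv_shift_inv_F2 (u : (ZMod 2)[X]) (hd : derivative u = 0)
    (hu : u.comp (X + C 1) = u) : ∃ Q : (ZMod 2)[X], u = Q.comp (X ^ 4 + X ^ 2) := by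
  have h2 := h2F
  have hexp : expand (ZMod 2) 2 (contract 2 u) = u := expand_contract 2 hd (by norm_num)
  set h := contract 2 u with hh
  have hcomp : u = h.comp (X ^ 2) := by rw [← hexp, expand_eq_comp_X_pow]
  have hsq : ((X + C 1 : (ZMod 2)[X])) ^ 2 = X ^ 2 + C 1 := by
    rw [C_1]
    linear_combination X * h2
  have e1 : ((X : (ZMod 2)[X]) + C 1).comp (X ^ 2) = (X ^ 2).comp (X + C 1) := by
    rw [add_comp, X_comp, C_comp, pow_comp, X_comp, hsq]
  have key : (h.comp (X + C 1)).comp (X ^ 2) = h.comp (X ^ 2) := by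
    rw [comp_assoc, e1, ← comp_assoc, ← hcomp, hu, hcomp]
  have hinv : h.comp (X + C 1) = h := by
    have := (expand_inj (show 0 < 2 by norm_num)
      (f := h.comp (X + C 1)) (g := h)).mp
    apply this
    rw [expand_eq_comp_X_pow, expand_eq_comp_X_pow]
    exact key
  obtain ⟨Q, hQ⟩ := shift_inv_F2 h hinv
  refine ⟨Q, ?_⟩
  rw [hcomp, hQ, comp_assoc, add_comp, pow_comp, X_comp, ← pow_mul]

-- identities over ZMod 4
lemma I1 : Y2.comp (X + C 1) = Y2 := by
  simp only [Y2, mul_comp, add_comp, neg_comp, X_comp, C_comp, one_comp, pow_comp, C_1]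
  linear_combination (X^3 : (ZMod 4)[X]) * h4

lemma I2 : (C 2 * y4).comp (X + C 1) = C 2 * y4 := by
  simp only [y4, mul_comp, add_comp, neg_comp, X_comp, C_comp, one_comp, C_1]
  rw [hC2]
  linear_combination (-X : (ZMod 4)[X]) * h4

lemma I3 (w : (ZMod 4)[X]) : derivative Y2 * (C 2 * w) = 0 := by
  rw [derivative_pow]
  rw [show ((2:ℕ) : ZMod 4) = 2 from rfl]
  linear_combination (y4 ^ (2-1) * derivative y4 * w) * hCC

lemma I4 (w : (ZMod 4)[X]) : derivative (C 2 * y4) * (C 2 * w) = 0 := by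
  rw [derivative_C_mul]
  linear_combination (derivative y4 * w) * hCC

lemma I5 : y4.map ψ = X ^ 2 + X := by
  simp only [Polynomial.map_mul, Polynomial.map_add, Polynomial.map_neg, Polynomial.map_one, map_X]
  linear_combination (-X^2 : (ZMod 2)[X]) * h2F

lemma I6 : Y2.map ψ = X ^ 4 + X ^ 2 := by
  rw [show Y2 = y4 ^ 2 from rfl, Polynomial.map_pow, I5]
  linear_combination (X^3 : (ZMod 2)[X]) * h2F

/-- every automorphism fixes p if p is fixed by the unit shift and kills 2-multiples
of its derivative -/
lemma fix_of_inv (σ : (ZMod 4)[X] ≃ₐ[ZMod 4] (ZMod 4)[X]) (p : (ZMod 4)[X])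
    (hp1 : p.comp (X + C 1) = p) (hp2 : ∀ w, derivative p * (C 2 * w) = 0) : σ p = p := by
  rw [autApply]
  rcases sigma_X_structure σ with hc | hc
  · obtain ⟨w, hw⟩ := exists_C2_mul (p := σ X - X)
      (by rw [Polynomial.map_sub, hc, map_X, sub_self])
    have hσX : σ X = X + C 2 * w := by linear_combination hw
    rw [hσX, comp_X_add_sq_zero p _ (sqz w), hp2 w, add_zero]
  · obtain ⟨w, hw⟩ := exists_C2_mul (p := σ X - (X + C 1))
      (by rw [Polynomial.map_sub, hc]; simp)
    have hσX : σ X = (X + C 1) + C 2 * w := by linear_combination hw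
    have hco : ((X : (ZMod 4)[X]) + C 1).comp (X + C 2 * w) = σ X := by
      rw [add_comp, X_comp, C_comp, hσX]
      ring
    rw [← hco, ← comp_assoc, hp1, comp_X_add_sq_zero p _ (sqz w), hp2 w, add_zero]

/-- the lift of a mod-2 polynomial -/
noncomputable def lf (a : ZMod 2) : ZMod 4 := if a = 0 then 0 else 1

lemma lf_zero : lf 0 = 0 := by unfold lf; decide

noncomputable def L (P : (ZMod 2)[X]) : (ZMod 4)[X] := ⟨⟨P.toFinsupp.coeff.mapRange lf lf_zero⟩⟩

lemma map_L (P : (ZMod 2)[X]) : (L P).map ψ = P := by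
  ext n
  rw [coeff_map]
  show ψ (lf (P.coeff n)) = P.coeff n
  generalize P.coeff n = a
  revert a
  unfold lf
  decide

lemma mem_two_mul_comp (Q : (ZMod 4)[X]) :
    C 2 * Q.comp y4 ∈ Algebra.adjoin (ZMod 4)
      ({(X * (-X + 1)) ^ 2, 2 * (X * (-X + 1))} : Set ((ZMod 4)[X])) := by
  have hsets : ({(X * (-X + 1)) ^ 2, 2 * (X * (-X + 1))} : Set ((ZMod 4)[X])) =
      {Y2, C 2 * y4} := by rw [hC2]
  rw [hsets]
  have hY2 : Y2 ∈ Algebra.adjoin (ZMod 4) ({Y2, C 2 * y4} : Set ((ZMod 4)[X])) :=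
    Algebra.subset_adjoin (Set.mem_insert _ _)
  have hy : C 2 * y4 ∈ Algebra.adjoin (ZMod 4) ({Y2, C 2 * y4} : Set ((ZMod 4)[X])) :=
    Algebra.subset_adjoin (Set.mem_insert_of_mem _ rfl)
  have hCmem : ∀ a : ZMod 4, (C a : (ZMod 4)[X]) ∈
      Algebra.adjoin (ZMod 4) ({Y2, C 2 * y4} : Set ((ZMod 4)[X])) := by
    intro a
    have := Subalgebra.algebraMap_mem
      (Algebra.adjoin (ZMod 4) ({Y2, C 2 * y4} : Set ((ZMod 4)[X]))) a
    rwa [Polynomial.algebraMap_eq] at this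
  induction Q using Polynomial.induction_on' with
  | add p q hp hq => rw [add_comp, mul_add]; exact add_mem hp hq
  | monomial n a =>
    rw [monomial_comp]
    rcases Nat.even_or_odd n with ⟨k, hk⟩ | ⟨k, hk⟩
    · have he : C 2 * (C a * y4 ^ n) = C a * (C 2 * (y4 ^ 2) ^ k) := by
        rw [hk, ← pow_mul, two_mul]; ring
      rw [he]
      exact mul_mem (hCmem a) (mul_mem (hCmem 2) (pow_mem hY2 k))
    · have he : C 2 * (C a * y4 ^ n) = C a * ((y4 ^ 2) ^ k * (C 2 * y4)) := by
        rw [hk, ← pow_mul]; ring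
      rw [he]
      exact mul_mem (hCmem a) (mul_mem (pow_mem hY2 k) hy)

end Zmod4Inv

open Zmod4Inv

/-- Theorem: over `R = ℤ/4ℤ`, if a subgroup `H` of `G(R)` is not contained in `A` and
`H ∩ A` is nontrivial, then the ring of invariants `R[x]^H` is `R[y², 2y]`,
where `y = x·(-x+1)`. -/
theorem zmod4_invariants_of_mixed_subgroup
    (H : Subgroup ((ZMod 4)[X] ≃ₐ[ZMod 4] (ZMod 4)[X]))
    (h1 : ¬ H ≤ nilShiftSubgroup) (h2 : H ⊓ nilShiftSubgroup ≠ ⊥) :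
    {g : (ZMod 4)[X] | ∀ σ ∈ H, σ g = g} =
      (Algebra.adjoin (ZMod 4)
        ({(X * (-X + 1)) ^ 2, 2 * (X * (-X + 1))} : Set ((ZMod 4)[X])) : Set ((ZMod 4)[X])) := by
  ext g
  simp only [Set.mem_setOf_eq, SetLike.mem_coe]
  constructor
  · intro hg
    -- get σ in H ⊓ A, σ ≠ 1
    obtain ⟨a, ha⟩ := Subgroup.ne_bot_iff_exists_ne_one.mp h2
    obtain ⟨hσH, hσA⟩ := Subgroup.mem_inf.mp a.2
    set σ := (a : (ZMod 4)[X] ≃ₐ[ZMod 4] (ZMod 4)[X]) with hσdef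
    have hσ1 : σ ≠ 1 := fun h => ha (Subtype.ext h)
    have hnil : IsNilpotent (σ X - X) := hσA
    obtain ⟨w, hw⟩ := exists_C2_mul (isNilpotent_iff_map.mp hnil)
    have hσX : σ X = X + C 2 * w := by linear_combination hw
    have hwne : w.map ψ ≠ 0 := by
      intro h0
      obtain ⟨v, hv⟩ := exists_C2_mul h0
      apply hσ1
      have hXX : σ X = X := by rw [hσX, hv, ← mul_assoc, hCC, zero_mul, add_zero]
      exact AlgEquiv.ext fun p => by rw [AlgEquiv.one_apply, autApply, hXX, comp_X]
    -- derivative condition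
    have hder0 : (derivative g).map ψ = 0 := by
      have he : g.comp (σ X) = g := by rw [← autApply]; exact hg σ hσH
      rw [hσX, comp_X_add_sq_zero g _ (sqz w)] at he
      have h3 : C 2 * (derivative g * w) = 0 := by linear_combination he
      have h5 := two_mul_eq_zero_iff.mp h3
      rw [Polynomial.map_mul] at h5
      rcases mul_eq_zero.mp h5 with h | h
      · exact h
      · exact absurd h hwne
    -- get τ in H, not in A
    obtain ⟨τ, hτH, hτA⟩ := SetLike.not_le_iff_exists.mp h1
    have hτn : ¬ IsNilpotent (τ X - X) := hτA
    have hτmap : (τ X).map ψ = X + C 1 := by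
      rcases sigma_X_structure τ with h | h
      · exact absurd (isNilpotent_iff_map.mpr
          (by rw [Polynomial.map_sub, h, map_X, sub_self])) hτn
      · exact h
    obtain ⟨w2, hw2⟩ := exists_C2_mul (p := τ X - (X + C 1))
      (by rw [Polynomial.map_sub, hτmap]; simp)
    have hτX : τ X = (X + C 1) + C 2 * w2 := by linear_combination hw2
    -- shift invariance of g
    have hshift : g.comp (X + C 1) = g := by
      have he : g.comp (τ X) = g := by rw [← autApply]; exact hg τ hτH
      have hco : ((X : (ZMod 4)[X]) + C 1).comp (X + C 2 * w2) = τ X := by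
        rw [add_comp, X_comp, C_comp, hτX]
        ring
      rw [← hco, ← comp_assoc, comp_X_add_sq_zero _ _ (sqz w2)] at he
      have hz : derivative (g.comp (X + C 1)) * (C 2 * w2) = 0 := by
        rw [derivative_comp, derivative_add, derivative_X, derivative_C, add_zero]
        obtain ⟨v, hv⟩ := exists_C2_mul (p := (derivative g).comp (X + C 1))
          (by rw [Polynomial.map_comp, hder0, zero_comp])
        rw [hv]
        linear_combination (v * w2) * hCC
      rw [hz, add_zero] at he
      exact he
    -- push to F2
    have hgb_d : derivative (g.map ψ) = 0 := by rw [derivative_map, hder0]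
    have hgb_s : (g.map ψ).comp (X + C 1) = g.map ψ := by
      have := congrArg (Polynomial.map ψ) hshift
      rwa [Polynomial.map_comp, Polynomial.map_add, map_X, map_C, map_one] at this
    obtain ⟨P, hP⟩ := deriv_shift_inv_F2 (g.map ψ) hgb_d hgb_s
    have hglift_map : ((L P).comp Y2).map ψ = g.map ψ := by
      rw [Polynomial.map_comp, map_L, I6, ← hP]
    obtain ⟨u, hu⟩ := exists_C2_mul (p := g - (L P).comp Y2)
      (by rw [Polynomial.map_sub, hglift_map, sub_self])
    have hglift_s : ((L P).comp Y2).comp (X + C 1) = (L P).comp Y2 := by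
      rw [comp_assoc, I1]
    have hu_s : C 2 * (u.comp (X + C 1) - u) = 0 := by
      have e : (C 2 * u).comp (X + C 1) = C 2 * u := by
        rw [← hu, sub_comp, hshift, hglift_s]
      have e2 : (C 2 * u).comp (X + C 1) = C 2 * u.comp (X + C 1) := by
        rw [mul_comp, C_comp]
      linear_combination e - e2
    have hub_s : (u.map ψ).comp (X + C 1) = u.map ψ := by
      have h5 := two_mul_eq_zero_iff.mp hu_s
      rw [Polynomial.map_sub, Polynomial.map_comp, Polynomial.map_add, map_X, map_C, map_one,
        sub_eq_zero] at h5
      exact h5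
    obtain ⟨Q, hQ⟩ := shift_inv_F2 (u.map ψ) hub_s
    obtain ⟨v, hv⟩ := exists_C2_mul (p := u - (L Q).comp y4)
      (by rw [Polynomial.map_sub, Polynomial.map_comp, map_L, I5, ← hQ, sub_self])
    have hfinal : g = (L P).comp Y2 + C 2 * ((L Q).comp y4) := by
      linear_combination hu + C 2 * hv + v * hCC
    rw [hfinal]
    refine add_mem ?_ (mem_two_mul_comp (L Q))
    have hmem : aeval Y2 (L P) ∈ Algebra.adjoin (ZMod 4) ({Y2} : Set ((ZMod 4)[X])) :=
      aeval_mem_adjoin_singleton _ _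
    rw [comp_eq_aeval]
    exact Algebra.adjoin_mono (Set.singleton_subset_iff.mpr (Set.mem_insert _ _)) hmem
  · intro hmem σ hσH
    induction hmem using Algebra.adjoin_induction with
    | mem x hx =>
      rcases hx with rfl | hx
      · exact fix_of_inv σ _ I1 I3
      · rcases hx with rfl
        have := fix_of_inv σ (C 2 * y4) I2 I4
        rwa [hC2] at this
    | algebraMap r => exact σ.commutes r
    | add x z hx hz hx' hz' => rw [map_add, hx', hz']
    | mul x z hx hz hx' hz' => rw [map_mul, hx', hz']
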